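/- Let G : ℝ → ℂ be continuous with compact support, let λ₀ ∈ ℝ, and let λ₁ ∈ ℂ with Im λ₁ < 0. Then for every q ∈ (0, 1], |∫_ℝ G(r) · (1 − e^{i q (r + λ₀ − λ₁)}) / (r + λ₀ − λ₁) dr| ≤ q · ∫_ℝ |G(r)| dr. -/

import Mathlib

open MeasureTheory Real

lemma exp_sub_one_bound (c : ℂ) (hre : c.re ≤ 0) :
    ‖Complex.exp c - 1‖ ≤ ‖c‖ := by
  have key : ∫ t in (0:ℝ)..1, Complex.exp (c * t) * c = Complex.exp c - 1 := by
    have := intervalIntegral.integral_eq_sub_of_hasDerivAt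
      (f := fun t : ℝ => Complex.exp (c * t))
      (f' := fun t : ℝ => Complex.exp (c * t) * c) (a := 0) (b := 1)
      (fun t _ => by
        have h1 : HasDerivAt (fun t : ℝ => c * (t : ℂ)) c t := by
          simpa using (Complex.ofRealCLM.hasDerivAt (x := t)).const_mul c
        exact h1.cexp)
      (((Complex.continuous_exp.comp (continuous_const.mul Complex.continuous_ofReal)).mul continuous_const).intervalIntegrable 0 1)
    simpa using this
  calc ‖Complex.exp c - 1‖
      = ‖∫ t in (0:ℝ)..1, Complex.exp (c * t) * c‖ := by rw [key]
    _ ≤ ‖c‖ * |1 - 0| := by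
        apply intervalIntegral.norm_integral_le_of_norm_le_const
        intro t ht
        rw [Set.uIoc_of_le (by norm_num)] at ht
        have h1 : ‖Complex.exp (c * t)‖ ≤ 1 := by
          rw [Complex.norm_exp]
          apply Real.exp_le_one_iff.2
          have : (c * (t : ℂ)).re = c.re * t := by simp [Complex.mul_re]
          rw [this]
          exact mul_nonpos_of_nonpos_of_nonneg hre ht.1.le
        calc ‖Complex.exp (c * t) * c‖ = ‖Complex.exp (c * t)‖ * ‖c‖ := norm_mul _ _
          _ ≤ 1 * ‖c‖ := by gcongr
          _ = ‖c‖ := by simp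
    _ = ‖c‖ := by norm_num

/-- Bound on the remainder term r₂(q) in the proof of Lemma 5.7. -/
theorem stmt_6 (G : ℝ → ℂ) (hG : Continuous G) (hsupp : HasCompactSupport G)
    (lam0 : ℝ) (lam1 : ℂ) (him : lam1.im < 0) (q : ℝ) (hq : q ∈ Set.Ioc (0 : ℝ) 1) :
    ‖∫ r : ℝ,
        G r * (1 - Complex.exp (Complex.I * (q : ℂ) * ((r : ℂ) + (lam0 : ℂ) - lam1))) /
          ((r : ℂ) + (lam0 : ℂ) - lam1)‖
      ≤ q * ∫ r : ℝ, ‖G r‖ := by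
  obtain ⟨hq0, hq1⟩ := hq
  have hzim : ∀ r : ℝ, ((r : ℂ) + (lam0 : ℂ) - lam1).im = -lam1.im := by
    intro r; simp
  have hz : ∀ r : ℝ, ((r : ℂ) + (lam0 : ℂ) - lam1) ≠ 0 := by
    intro r h
    have := hzim r
    rw [h] at this
    simp at this; linarith
  have hpt : ∀ r : ℝ,
      ‖G r * (1 - Complex.exp (Complex.I * (q : ℂ) * ((r : ℂ) + (lam0 : ℂ) - lam1))) /
          ((r : ℂ) + (lam0 : ℂ) - lam1)‖ ≤ q * ‖G r‖ := by
    intro r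
    set z := (r : ℂ) + (lam0 : ℂ) - lam1 with hzdef
    have hb : ‖1 - Complex.exp (Complex.I * (q : ℂ) * z)‖ ≤ q * ‖z‖ := by
      have : ‖1 - Complex.exp (Complex.I * (q : ℂ) * z)‖
          = ‖Complex.exp (Complex.I * (q : ℂ) * z) - 1‖ := by
        rw [norm_sub_rev]
      rw [this]
      have hre : (Complex.I * (q : ℂ) * z).re ≤ 0 := by
        have : (Complex.I * (q : ℂ) * z).re = -(q * z.im) := by
          simp [Complex.mul_re, Complex.mul_im]
        rw [this, hzdef, hzim r]
        nlinarith
      calc ‖Complex.exp (Complex.I * (q : ℂ) * z) - 1‖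
          ≤ ‖Complex.I * (q : ℂ) * z‖ := exp_sub_one_bound _ hre
        _ = q * ‖z‖ := by
            simp [norm_mul, Complex.norm_real, abs_of_pos hq0]
    rw [norm_div, norm_mul]
    rw [div_le_iff₀ (norm_pos_iff.2 (hz r))]
    calc ‖G r‖ * ‖1 - Complex.exp (Complex.I * (q : ℂ) * z)‖
        ≤ ‖G r‖ * (q * ‖z‖) := by
          exact mul_le_mul_of_nonneg_left hb (norm_nonneg _)
      _ = q * ‖G r‖ * ‖z‖ := by ring
  have hint : Integrable (fun r : ℝ => q * ‖G r‖) := by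
    exact ((hG.norm.integrable_of_hasCompactSupport hsupp.norm).const_mul q)
  calc ‖∫ r : ℝ,
        G r * (1 - Complex.exp (Complex.I * (q : ℂ) * ((r : ℂ) + (lam0 : ℂ) - lam1))) /
          ((r : ℂ) + (lam0 : ℂ) - lam1)‖
      ≤ ∫ r : ℝ, ‖G r * (1 - Complex.exp (Complex.I * (q : ℂ) * ((r : ℂ) + (lam0 : ℂ) - lam1))) /
          ((r : ℂ) + (lam0 : ℂ) - lam1)‖ := by
        exact norm_integral_le_integral_norm _
    _ ≤ ∫ r : ℝ, q * ‖G r‖ := by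
        apply integral_mono_of_nonneg
        · filter_upwards with r using norm_nonneg _
        · exact hint
        · filter_upwards with r using hpt r
    _ = q * ∫ r : ℝ, ‖G r‖ := integral_const_mul q _
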